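/- Let D = log 2/log 3 and 𝐩 = 2π/log 3. The function G(x) = Σ_{n∈ℤ} e^{2πinx}/(1 − D − in𝐩) defines (as a conditionally convergent Fourier series, summed symmetrically) a nonconstant periodic function of period 1 on ℝ. -/

import Mathlib

open Filter Complex Finset

private noncomputable def aa : ℝ := 1 - Real.log 2 / Real.log 3
private noncomputable def bb : ℝ := 2 * Real.pi / Real.log 3

private lemma aa_pos : 0 < aa := by
  have h2 : (0:ℝ) < Real.log 2 := Real.log_pos (by norm_num)
  have h3 : Real.log 2 < Real.log 3 := Real.log_lt_log (by norm_num) (by norm_num)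
  have : Real.log 2 / Real.log 3 < 1 := (div_lt_one (h2.trans h3)).mpr h3
  unfold aa; linarith

private lemma bb_pos : 0 < bb := by
  have h3 : (0:ℝ) < Real.log 3 := Real.log_pos (by norm_num)
  unfold bb; positivity

private noncomputable def trm (x : ℝ) (n : ℤ) : ℂ :=
  Complex.exp (2 * (Real.pi : ℂ) * Complex.I * (n : ℂ) * (x : ℂ)) /
    (1 - ((Real.log 2 / Real.log 3 : ℝ) : ℂ)
      - Complex.I * (n : ℂ) * ((2 * Real.pi / Real.log 3 : ℝ) : ℂ))

private noncomputable def gg (x : ℝ) (i : ℕ) : ℝ :=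
  (2*aa*Real.cos (((i:ℝ)+1)*(2*Real.pi*x)) - 2*bb*((i:ℝ)+1)*Real.sin (((i:ℝ)+1)*(2*Real.pi*x)))
    / (aa^2 + bb^2*((i:ℝ)+1)^2)

private lemma trm_pair (x : ℝ) (i : ℕ) :
    trm x ((i:ℤ)+1) + trm x (-((i:ℤ)+1)) = ((gg x i : ℝ) : ℂ) := by
  set m : ℝ := (i:ℝ)+1 with hm
  set θ : ℝ := m*(2*Real.pi*x) with hθ
  set c : ℝ := Real.cos θ with hc
  set s : ℝ := Real.sin θ with hs
  have e1 : (2 * (Real.pi : ℂ) * Complex.I * (((i:ℤ)+1 : ℤ) : ℂ) * (x : ℂ)) = (θ:ℝ) * I := by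
    rw [hθ, hm]; push_cast; ring
  have e2 : (2 * (Real.pi : ℂ) * Complex.I * ((-((i:ℤ)+1) : ℤ) : ℂ) * (x : ℂ)) = ((-θ:ℝ)) * I := by
    rw [hθ, hm]; push_cast; ring
  have d1 : (1 - ((Real.log 2 / Real.log 3 : ℝ) : ℂ)
      - Complex.I * ((((i:ℤ)+1) : ℤ) : ℂ) * ((2 * Real.pi / Real.log 3 : ℝ) : ℂ))
      = (aa:ℂ) - I*(m:ℂ)*(bb:ℂ) := by
    unfold aa bb; rw [hm]; push_cast; ring
  have d2 : (1 - ((Real.log 2 / Real.log 3 : ℝ) : ℂ)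
      - Complex.I * (((-((i:ℤ)+1)) : ℤ) : ℂ) * ((2 * Real.pi / Real.log 3 : ℝ) : ℂ))
      = (aa:ℂ) + I*(m:ℂ)*(bb:ℂ) := by
    unfold aa bb; rw [hm]; push_cast; ring
  have hA : (aa:ℂ) - I*(m:ℂ)*(bb:ℂ) ≠ 0 := by
    intro h
    have := congrArg Complex.re h
    simp at this
    exact absurd this (ne_of_gt aa_pos)
  have hB : (aa:ℂ) + I*(m:ℂ)*(bb:ℂ) ≠ 0 := by
    intro h
    have := congrArg Complex.re h
    simp at this
    exact absurd this (ne_of_gt aa_pos)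
  have hm1 : (1:ℝ) ≤ m := by rw [hm]; exact_mod_cast Nat.le_add_left 1 i
  have hd : (aa^2 + bb^2*m^2 : ℝ) ≠ 0 := by
    have := aa_pos; have := bb_pos; positivity
  have hd' : ((aa:ℂ)^2 + (bb:ℂ)^2*(m:ℂ)^2) ≠ 0 := by exact_mod_cast hd
  unfold trm
  rw [e1, e2, d1, d2, Complex.exp_mul_I, Complex.exp_mul_I,
    ← Complex.ofReal_cos, ← Complex.ofReal_sin, ← Complex.ofReal_cos, ← Complex.ofReal_sin,
    Real.cos_neg, Real.sin_neg, ← hc, ← hs]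
  unfold gg
  rw [← hm, ← hθ, ← hc, ← hs]
  push_cast
  field_simp
  rw [eq_div_iff (by rw [mul_comm ((m:ℂ)^2)]; exact hd')]
  ring_nf
  rw [I_sq]
  ring

private lemma reprS (x : ℝ) (N : ℕ) :
    ∑ n ∈ Finset.Icc (-(N : ℤ)) (N : ℤ), trm x n
      = ((aa⁻¹ + ∑ i ∈ range N, gg x i : ℝ) : ℂ) := by
  induction N with
  | zero =>
      simp only [Nat.cast_zero, neg_zero, Finset.Icc_self, Finset.sum_singleton,
        range_zero, Finset.sum_empty, add_zero]
      unfold trm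
      have : (1 - ((Real.log 2 / Real.log 3 : ℝ) : ℂ)
          - Complex.I * ((0:ℤ) : ℂ) * ((2 * Real.pi / Real.log 3 : ℝ) : ℂ)) = ((aa:ℝ):ℂ) := by
        unfold aa; push_cast; ring
      rw [this]
      simp [Complex.ofReal_inv, one_div]
  | succ N ih =>
      have hset : Finset.Icc (-((N+1 : ℕ) : ℤ)) ((N+1 : ℕ) : ℤ)
          = insert ((N:ℤ)+1) (insert (-((N:ℤ)+1)) (Finset.Icc (-(N:ℤ)) (N:ℤ))) := by
        ext k; simp; omega
      have h1 : ((N:ℤ)+1) ∉ insert (-((N:ℤ)+1)) (Finset.Icc (-(N:ℤ)) (N:ℤ)) := by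
        simp; omega
      have h2 : (-((N:ℤ)+1)) ∉ Finset.Icc (-(N:ℤ)) (N:ℤ) := by simp
      rw [hset, Finset.sum_insert h1, Finset.sum_insert h2, ih, Finset.sum_range_succ]
      have := trm_pair x N
      push_cast
      push_cast at this
      linear_combination this

private lemma sin_sum_bounded (θ : ℝ) :
    ∃ C : ℝ, ∀ n : ℕ, ‖∑ i ∈ range n, Real.sin (((i:ℝ)+1)*θ)‖ ≤ C := by
  set w : ℂ := Complex.exp (θ * I) with hw
  have habs : ‖w‖ = 1 := Complex.norm_exp_ofReal_mul_I θ
  have hpow : ∀ m : ℕ, w ^ m = Complex.exp ((m*θ : ℝ) * I) := by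
    intro m
    rw [hw, ← Complex.exp_nat_mul]
    push_cast; ring_nf
  have hsum : ∀ n : ℕ, ∑ i ∈ range n, Real.sin (((i:ℝ)+1)*θ) = (∑ i ∈ range n, w ^ (i+1)).im := by
    intro n
    rw [Complex.im_sum]
    refine Finset.sum_congr rfl fun i _ => ?_
    rw [hpow (i+1), Complex.exp_ofReal_mul_I_im]
    push_cast; ring_nf
  by_cases h1 : w = 1
  · refine ⟨1, fun n => ?_⟩
    rw [Real.norm_eq_abs, hsum]
    simp [h1]
  · refine ⟨2 / ‖w - 1‖, fun n => ?_⟩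
    rw [Real.norm_eq_abs, hsum]
    calc |(∑ i ∈ range n, w ^ (i+1)).im| ≤ ‖∑ i ∈ range n, w ^ (i+1)‖ :=
          Complex.abs_im_le_norm _
      _ = ‖w * ((w ^ n - 1)/(w - 1))‖ := by
          rw [← geom_sum_eq h1 n, Finset.mul_sum]
          congr 1; exact Finset.sum_congr rfl fun i _ => pow_succ' w i
      _ ≤ 2 / ‖w - 1‖ := by
          rw [norm_mul, habs, one_mul, norm_div]
          gcongr
          calc ‖w ^ n - 1‖ ≤ ‖w ^ n‖ + 1 := by
                simpa using norm_sub_le (w ^ n) 1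
            _ ≤ 2 := by rw [norm_pow, habs, one_pow]; norm_num

private lemma gg_conv (x : ℝ) :
    ∃ r : ℝ, Tendsto (fun N => ∑ i ∈ range N, gg x i) atTop (nhds r) := by
  set θ : ℝ := 2*Real.pi*x with hθ
  set A : ℕ → ℝ := fun i => 2*aa*Real.cos (((i:ℝ)+1)*θ) / (aa^2 + bb^2*((i:ℝ)+1)^2) with hA
  set f : ℕ → ℝ := fun i => 2*bb*((i:ℝ)+1) / (aa^2 + bb^2*((i:ℝ)+1)^2) with hf
  set z : ℕ → ℝ := fun i => Real.sin (((i:ℝ)+1)*θ) with hz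
  have hsplit : ∀ i, gg x i = A i - f i • z i := by
    intro i
    have hden : (0:ℝ) < aa^2 + bb^2*((i:ℝ)+1)^2 := by
      have := aa_pos; have := bb_pos; positivity
    unfold gg
    rw [← hθ, hA, hf, hz]
    simp only [smul_eq_mul]
    rw [sub_div, div_mul_eq_mul_div]
  -- summability of A
  have hsummA : Summable A := by
    have hb2 : (0:ℝ) < bb^2 := by have := bb_pos; positivity
    have h1 : Summable (fun i : ℕ => (2*aa/bb^2) * (1/((i:ℝ)+1)^2)) := by
      apply Summable.mul_left
      have := (summable_nat_add_iff (f := fun n : ℕ => 1/(n:ℝ)^2) 1).mpr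
        (Real.summable_one_div_nat_pow.mpr one_lt_two)
      exact this.congr fun n => by push_cast; ring
    refine Summable.of_norm_bounded h1 fun i => ?_
    have hden : (0:ℝ) < aa^2 + bb^2*((i:ℝ)+1)^2 := by
      have := aa_pos; have := bb_pos; positivity
    have hden2 : bb^2*((i:ℝ)+1)^2 ≤ aa^2 + bb^2*((i:ℝ)+1)^2 := by nlinarith [sq_nonneg aa]
    have hi1 : (0:ℝ) < ((i:ℝ)+1)^2 := by positivity
    have hcos : |Real.cos (((i:ℝ)+1)*θ)| ≤ 1 := Real.abs_cos_le_one _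
    have haa := aa_pos
    rw [hA]
    simp only [Real.norm_eq_abs]
    calc |2*aa*Real.cos (((i:ℝ)+1)*θ) / (aa^2 + bb^2*((i:ℝ)+1)^2)|
        = 2*aa*|Real.cos (((i:ℝ)+1)*θ)| / (aa^2 + bb^2*((i:ℝ)+1)^2) := by
          rw [abs_div, _root_.abs_of_pos hden, abs_mul,
            _root_.abs_of_nonneg (by positivity : (0:ℝ) ≤ 2*aa)]
      _ ≤ 2*aa*1 / (bb^2*((i:ℝ)+1)^2) := by
          gcongr <;> nlinarith
      _ = 2*aa/bb^2 * (1/((i:ℝ)+1)^2) := by field_simp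
  -- Dirichlet part
  have hanti : Antitone f := by
    apply antitone_nat_of_succ_le
    intro n
    have haa := aa_pos; have hbb := bb_pos
    have hd1 : (0:ℝ) < aa^2 + bb^2*((n:ℝ)+1)^2 := by positivity
    have hd2 : (0:ℝ) < aa^2 + bb^2*(((n:ℝ)+1)+1)^2 := by positivity
    rw [hf]
    simp only
    push_cast
    rw [div_le_div_iff₀ hd2 hd1]
    have h1 : (1:ℝ) ≤ (n:ℝ)+1 := by
      have : (0:ℝ) ≤ (n:ℝ) := Nat.cast_nonneg n
      linarith
    have haab : aa^2 ≤ bb^2 := by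
      have h2 : aa ≤ 1 := by
        unfold aa
        have h2' : (0:ℝ) < Real.log 2 := Real.log_pos (by norm_num)
        have h3' : (0:ℝ) < Real.log 3 := Real.log_pos (by norm_num)
        have : 0 < Real.log 2 / Real.log 3 := by positivity
        linarith
      have h3 : (1:ℝ) ≤ bb := by
        unfold bb
        rw [le_div_iff₀ (Real.log_pos (by norm_num))]
        have : Real.log 3 ≤ 3 := by
          calc Real.log 3 ≤ 3 - 1 := by
                have := Real.log_le_sub_one_of_pos (by norm_num : (0:ℝ) < 3)
                linarith
            _ ≤ 3 := by norm_num
        nlinarith [Real.pi_gt_three]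
      nlinarith [aa_pos.le]
    have hm2 : (2:ℝ) ≤ ((n:ℝ)+1)*((n:ℝ)+1+1) := by nlinarith
    nlinarith [mul_le_mul_of_nonneg_left hm2 (mul_pos hbb hbb).le, haab,
      mul_pos hbb (mul_pos hbb hbb)]
  have hf0 : Tendsto f atTop (nhds 0) := by
    have hbb := bb_pos; have haa := aa_pos
    apply squeeze_zero (fun n => by positivity)
      (g := fun n : ℕ => (2/bb) * (1/((n:ℝ)+1)))
    · intro n
      rw [hf]
      simp only
      have hd1 : (0:ℝ) < aa^2 + bb^2*((n:ℝ)+1)^2 := by positivity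
      have hrhs : (2/bb) * (1/((n:ℝ)+1)) = 2/(bb*((n:ℝ)+1)) := by
        field_simp
      rw [hrhs, div_le_div_iff₀ hd1 (by positivity)]
      nlinarith [sq_nonneg aa]
    · have := tendsto_one_div_add_atTop_nhds_zero_nat (𝕜 := ℝ)
      simpa using this.const_mul (2/bb)
  obtain ⟨C, hC⟩ := sin_sum_bounded θ
  have hcB : CauchySeq (fun N => ∑ i ∈ range N, f i • z i) :=
    hanti.cauchySeq_series_mul_of_tendsto_zero_of_bounded hf0 hC
  obtain ⟨LB, hLB⟩ := cauchySeq_tendsto_of_complete hcB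
  refine ⟨(∑' i, A i) - LB, ?_⟩
  have h1 : Tendsto (fun N => (∑ i ∈ range N, A i) - (∑ i ∈ range N, f i • z i)) atTop
      (nhds ((∑' i, A i) - LB)) := (hsummA.hasSum.tendsto_sum_nat).sub hLB
  convert h1 using 1
  funext N
  rw [← Finset.sum_sub_distrib]
  exact Finset.sum_congr rfl fun i _ => hsplit i

/-- With D = log 2/log 3 and 𝐩 = 2π/log 3, the symmetric partial sums
Σ_{|n|≤N} e^{2πinx}/(1 - D - in𝐩) converge pointwise to a function G which is
periodic of period 1 and nonconstant. -/
theorem stmt_19 :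
    ∃ G : ℝ → ℂ,
      (∀ x : ℝ, Tendsto (fun N : ℕ => ∑ n ∈ Finset.Icc (-(N : ℤ)) (N : ℤ),
          Complex.exp (2 * (Real.pi : ℂ) * Complex.I * (n : ℂ) * (x : ℂ)) /
            (1 - ((Real.log 2 / Real.log 3 : ℝ) : ℂ)
              - Complex.I * (n : ℂ) * ((2 * Real.pi / Real.log 3 : ℝ) : ℂ)))
        atTop (nhds (G x))) ∧
      (∀ x : ℝ, G (x + 1) = G x) ∧
      (∃ x y : ℝ, G x ≠ G y) := by
  choose L hL using gg_conv
  refine ⟨fun x => ((aa⁻¹ + L x : ℝ) : ℂ), ?_, ?_, ?_⟩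
  · intro x
    have h1 : Tendsto (fun N : ℕ => ((aa⁻¹ + ∑ i ∈ range N, gg x i : ℝ) : ℂ)) atTop
        (nhds ((aa⁻¹ + L x : ℝ) : ℂ)) :=
      (Complex.continuous_ofReal.tendsto _).comp (tendsto_const_nhds.add (hL x))
    convert h1 using 2 with N
    exact reprS x N
  · intro x
    have hgg : gg (x+1) = gg x := by
      funext i
      unfold gg
      have hc : ((i:ℝ)+1)*(2*Real.pi*(x+1)) = ((i:ℝ)+1)*(2*Real.pi*x) + ((i:ℕ)+1 : ℤ)*(2*Real.pi) := by
        push_cast; ring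
      rw [hc, Real.cos_add_int_mul_two_pi, Real.sin_add_int_mul_two_pi]
    have hLx : L (x+1) = L x := by
      have h1 := hL (x+1)
      rw [hgg] at h1
      exact tendsto_nhds_unique h1 (hL x)
    show ((aa⁻¹ + L (x+1) : ℝ) : ℂ) = ((aa⁻¹ + L x : ℝ) : ℂ)
    rw [hLx]
  · refine ⟨0, 1/2, ?_⟩
    have haa := aa_pos; have hbb := bb_pos
    have hne : L 0 ≠ L (1/2) := by
      have hdiff : Tendsto (fun N => (∑ i ∈ range N, gg 0 i) - (∑ i ∈ range N, gg (1/2) i))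
          atTop (nhds (L 0 - L (1/2))) := (hL 0).sub (hL (1/2))
      have hpos : 4*aa/(aa^2+bb^2) ≤ L 0 - L (1/2) := by
        apply ge_of_tendsto hdiff
        filter_upwards [eventually_ge_atTop 1] with N hN
        have hterm : ∀ i : ℕ, gg 0 i - gg (1/2) i
            = 2*aa*(1 - Real.cos (((i:ℝ)+1)*Real.pi)) / (aa^2 + bb^2*((i:ℝ)+1)^2) := by
          intro i
          unfold gg
          have e0 : ((i:ℝ)+1)*(2*Real.pi*0) = 0 := by ring
          have e2 : ((i:ℝ)+1)*(2*Real.pi*(1/2)) = ((i:ℕ)+1 : ℕ)*Real.pi := by push_cast; ring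
          have hsin : Real.sin (((i:ℕ)+1 : ℕ)*Real.pi) = 0 := Real.sin_nat_mul_pi (i+1)
          rw [e0, e2, hsin, Real.cos_zero, Real.sin_zero]
          have hden : (0:ℝ) < aa^2 + bb^2*((i:ℝ)+1)^2 := by positivity
          push_cast
          field_simp
          ring
        rw [← Finset.sum_sub_distrib]
        have hnn : ∀ i ∈ range N, 0 ≤ gg 0 i - gg (1/2) i := by
          intro i _
          rw [hterm i]
          have hden : (0:ℝ) < aa^2 + bb^2*((i:ℝ)+1)^2 := by positivity
          have hcos : Real.cos (((i:ℝ)+1)*Real.pi) ≤ 1 := Real.cos_le_one _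
          apply div_nonneg _ hden.le
          nlinarith
        have h0mem : (0:ℕ) ∈ range N := Finset.mem_range.mpr hN
        have hfirst : gg 0 0 - gg (1/2) 0 = 4*aa/(aa^2+bb^2) := by
          rw [hterm 0]
          norm_num [Real.cos_pi]
          ring_nf
        calc (4:ℝ)*aa/(aa^2+bb^2) = gg 0 0 - gg (1/2) 0 := hfirst.symm
          _ ≤ ∑ i ∈ range N, (gg 0 i - gg (1/2) i) :=
              Finset.single_le_sum hnn h0mem
      have : 0 < L 0 - L (1/2) := by
        have : (0:ℝ) < 4*aa/(aa^2+bb^2) := by positivity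
        linarith
      intro h; rw [h] at this; simp at this
    intro h
    simp only [Complex.ofReal_inj, add_right_inj] at h
    exact hne h
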